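/- Let G be a compact Hausdorff topological group and let φ : ℝ → G be a continuous group homomorphism. Suppose that for every s > 0 the element φ(s) is conjugate in G to φ(1). Then φ(t) = 1 for all t ∈ ℝ. -/

import Mathlib

/-- A continuous one-parameter subgroup of a compact Hausdorff group all of whose
elements `φ s`, `s > 0`, are conjugate to `φ 1`, is trivial. -/
theorem one_parameter_all_conjugate_in_compact_group_trivial
    {G : Type*} [Group G] [TopologicalSpace G] [IsTopologicalGroup G]
    [CompactSpace G] [T2Space G]
    (φ : ℝ → G) (hhom : ∀ s t : ℝ, φ (s + t) = φ s * φ t) (hcont : Continuous φ)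
    (hconj : ∀ s : ℝ, 0 < s → ∃ g : G, g * φ 1 * g⁻¹ = φ s) :
    ∀ t : ℝ, φ t = 1 := by
  have h0 : φ 0 = 1 := by
    have := hhom 0 0
    simp only [add_zero] at this
    exact (mul_eq_right.mp this.symm)
  -- the conjugacy class of φ 1 is compact, hence closed
  set C : Set G := (fun g : G => g * φ 1 * g⁻¹) '' Set.univ with hC
  have hcomp : IsCompact C :=
    isCompact_univ.image (by continuity)
  have hclosed : IsClosed C := hcomp.isClosed
  -- 1 is a limit of elements of C
  have htend : Filter.Tendsto (fun n : ℕ => φ (1 / (n + 1))) Filter.atTop (nhds 1) := by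
    have h1 : Filter.Tendsto (fun n : ℕ => (1 : ℝ) / (n + 1)) Filter.atTop (nhds 0) :=
      tendsto_one_div_add_atTop_nhds_zero_nat
    have := (hcont.tendsto 0).comp h1
    simpa [h0, Function.comp_def] using this
  have hmem : ∀ n : ℕ, φ (1 / (n + 1)) ∈ C := by
    intro n
    obtain ⟨g, hg⟩ := hconj (1 / (n + 1)) (by positivity)
    exact ⟨g, Set.mem_univ g, hg⟩
  have h1C : (1 : G) ∈ C :=
    hclosed.mem_of_tendsto htend (Filter.Eventually.of_forall hmem)
  obtain ⟨g, -, hg⟩ := h1C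
  have hφ1 : φ 1 = 1 := by
    have : φ 1 = g⁻¹ * 1 * g := by
      rw [← hg]; group
    simpa using this
  intro t
  rcases lt_trichotomy t 0 with ht | ht | ht
  · have hpos : φ (-t) = 1 := by
      obtain ⟨g, hg⟩ := hconj (-t) (by linarith)
      rw [← hg, hφ1]; group
    have := hhom t (-t)
    simp only [add_neg_cancel, h0, hpos, mul_one] at this
    exact this.symm
  · rw [ht, h0]
  · obtain ⟨g, hg⟩ := hconj t ht
    rw [← hg, hφ1]; group
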